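/- For every t ∈ (−1/2, 1/2) and every n ≥ 1, the function q_t(w) := −tan(πt)·‖w‖² on ℂ^n is an elementary generating function of the rotation g_t(z) := e^{−2iπt}·z; that is, the map z ↦ (z + e^{−2iπt}z)/2 is a bijection of ℂ^n and ∇q_t((z + e^{−2iπt}z)/2) = i·(z − e^{−2iπt}z) for all z ∈ ℂ^n. -/

import Mathlib

noncomputable section
open scoped RealInnerProductSpace
open Complex Function Real

abbrev Cd (d : ℕ) : Type := EuclideanSpace ℂ (Fin d)

/-- ψ_σ(z) := (z + σ(z))/2. -/
def psiMap {d : ℕ} (σ : Cd d → Cd d) : Cd d → Cd d := fun z => (2⁻¹ : ℝ) • (z + σ z)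

/-- `f` is an elementary generating function of `σ`. -/
def IsElemGF {d : ℕ} (σ : Cd d → Cd d) (f : Cd d → ℝ) : Prop :=
  Function.Bijective (psiMap σ) ∧
  ∀ z : Cd d, gradient f (psiMap σ z) = Complex.I • (z - σ z)

/-- the rotation g_t(z) := e^{−2iπt}·z. -/
def gRot {n : ℕ} (t : ℝ) : Cd n → Cd n :=
  fun z => Complex.exp (((-(2 * π * t) : ℝ) : ℂ) * Complex.I) • z

/-- q_t(w) := −tan(πt)·‖w‖². -/
def qGen {n : ℕ} (t : ℝ) : Cd n → ℝ :=
  fun w => -Real.tan (π * t) * ‖w‖ ^ 2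

lemma gradSq (n : ℕ) (c : ℝ) (x : Cd n) :
    HasGradientAt (fun w : Cd n => c * ‖w‖ ^ 2) ((2 * c) • x) x := by
  rw [hasGradientAt_iff_hasFDerivAt]
  have h := (hasStrictFDerivAt_norm_sq x).hasFDerivAt.const_mul c
  convert h using 1
  · rfl
  ext y
  simp [InnerProductSpace.toDual_apply_apply, real_inner_smul_left]
  ring

lemma key (θ : ℝ) (hc : Real.cos θ ≠ 0) :
    (-(Real.tan θ) : ℂ) * (1 + Complex.exp (((-(2*θ)):ℝ) * Complex.I))
      = Complex.I * (1 - Complex.exp (((-(2*θ)):ℝ) * Complex.I)) := by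
  have he : Complex.exp (((-(2*θ)):ℝ) * Complex.I)
      = (Real.cos (2*θ) : ℂ) - (Real.sin (2*θ) : ℂ) * Complex.I := by
    rw [Complex.exp_mul_I, ← Complex.ofReal_cos, ← Complex.ofReal_sin,
      Real.cos_neg, Real.sin_neg]
    push_cast [← Complex.ofReal_cos, ← Complex.ofReal_sin]
    ring
  have hsc : (Real.sin θ : ℂ)^2 + (Real.cos θ : ℂ)^2 = 1 := by
    have := Real.sin_sq_add_cos_sq θ
    exact_mod_cast congrArg (Complex.ofReal) this
  have hc' : (Real.cos θ : ℂ) ≠ 0 := by exact_mod_cast hc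
  rw [he, Real.tan_eq_sin_div_cos, Real.cos_two_mul, Real.sin_two_mul]
  simp only [Complex.ofReal_sub, Complex.ofReal_mul, Complex.ofReal_one,
    Complex.ofReal_pow, Complex.ofReal_div, Complex.ofReal_ofNat]
  generalize hS : (Real.sin θ : ℂ) = S at hsc ⊢
  generalize hC : (Real.cos θ : ℂ) = C at hsc hc' ⊢
  field_simp
  linear_combination ((2:ℂ)*C*Complex.I) * hsc + (-2*S*C^2) * Complex.I_sq

theorem stmt9 (n : ℕ) (hn : 1 ≤ n) (t : ℝ)
    (ht : t ∈ Set.Ioo (-(1 / 2) : ℝ) (1 / 2)) :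
    IsElemGF (gRot (n := n) t) (qGen t) := by
  set e : ℂ := Complex.exp (((-(2 * π * t) : ℝ) : ℂ) * Complex.I) with he
  have hcos : Real.cos (π * t) ≠ 0 := by
    have hpi := Real.pi_pos
    apply ne_of_gt
    apply Real.cos_pos_of_mem_Ioo
    constructor
    · nlinarith [ht.1]
    · nlinarith [ht.2]
  have hexp : ((-(2 * π * t) : ℝ) : ℂ) = ((-(2 * (π * t)) : ℝ) : ℂ) := by
    norm_num [mul_assoc]
  have hkey : (-(Real.tan (π * t)) : ℂ) * (1 + e) = Complex.I * (1 - e) := by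
    rw [he, hexp]; exact key (π * t) hcos
  have h1e : (1 + e) ≠ 0 := by
    intro h0
    have he1 : e = -1 := by linear_combination h0
    rw [he1] at hkey
    simp at hkey
  set a : ℂ := (2⁻¹ : ℂ) * (1 + e) with ha
  have ha0 : a ≠ 0 := by
    simp [ha, h1e]
  have hpsi : ∀ z : Cd n, psiMap (gRot (n := n) t) z = a • z := by
    intro z
    show (2⁻¹ : ℝ) • (z + e • z) = a • z
    rw [show z + e • z = (1 + e) • z from by rw [add_smul, one_smul],
      ← Complex.coe_smul, smul_smul, ha]
    norm_num
  constructor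
  · have : psiMap (gRot (n := n) t) = fun z => a • z := funext hpsi
    rw [this]
    refine ⟨fun z w h => ?_, fun w => ⟨a⁻¹ • w, ?_⟩⟩
    · have := congrArg (fun v => a⁻¹ • v) h
      simpa [smul_smul, inv_mul_cancel₀ ha0] using this
    · simp [smul_smul, mul_inv_cancel₀ ha0]
  · intro z
    have hg := (gradSq n (-Real.tan (π * t)) (psiMap (gRot (n := n) t) z)).gradient
    rw [show qGen (n := n) t = fun w : Cd n => (-Real.tan (π * t)) * ‖w‖ ^ 2 from rfl, hg,
      hpsi z, ← Complex.coe_smul, smul_smul]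
    show _ = Complex.I • (z - e • z)
    rw [show z - e • z = (1 - e) • z from by rw [sub_smul, one_smul], smul_smul]
    congr 1
    simp only [Complex.ofReal_mul, Complex.ofReal_neg, Complex.ofReal_ofNat]
    rw [ha]
    linear_combination hkey
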